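/- Let U be a continuous real-valued function with compact support contained in the segment [−a, a] and let λ ∈ ℂ with Re λ > 0. Then λ is an eigenvalue of the Zakharov-Shabat system n1' − λ n1 = U n2, n2' + λ n2 = −U n1 — that is, there exists a solution (n1, n2) of the system on [−a, a] satisfying the boundary conditions n1(−a) = 1, n2(−a) = 0 and n1(a) = 0 — if and only if the dispersion equation Σ_{n=0}^∞ λⁿ ( e^{(−1)ⁿ Q(a)} X̃⁽ⁿ⁾(a) + e^{(−1)ⁿ⁺¹ Q(a)} X⁽ⁿ⁾(a) ) = 0 holds. -/

import Mathlib

open Set MeasureTheory Filter Finset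
open scoped Topology Interval

/-- The auxiliary functions for the Zakharov-Shabat system: `zsPow Q x0 ε n` is
obtained by `n` recursive integrations with weights `exp(ε (−1)ᵐ 2Q)` at step `m`. -/
noncomputable def zsPow (Q : ℝ → ℂ) (x0 : ℝ) (eps : ℂ) : ℕ → ℝ → ℂ
  | 0 => fun _ => 1
  | n + 1 => fun x => ∫ s in x0..x,
      zsPow Q x0 eps n s * Complex.exp (eps * (-1) ^ (n + 1) * 2 * Q s)

/-- The antiderivative `Q(x) = i ∫_{x0}^x U(t) dt` of `q = iU`. -/
noncomputable def zsQ (U : ℝ → ℝ) (x0 : ℝ) (x : ℝ) : ℂ :=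
  Complex.I * ((∫ t in x0..x, U t : ℝ) : ℂ)

namespace ZS

variable {U : ℝ → ℝ} {x0 : ℝ}

lemma zsQ_cont (hU : Continuous U) : Continuous (zsQ U x0) :=
  continuous_const.mul (Complex.continuous_ofReal.comp
    (intervalIntegral.continuous_primitive (fun a b => hU.intervalIntegrable a b) x0))

lemma zsQ_re (x : ℝ) : (zsQ U x0 x).re = 0 := by simp [zsQ]

lemma zsQ_hasDerivAt (hU : Continuous U) (x : ℝ) :
    HasDerivAt (zsQ U x0) (Complex.I * (U x : ℂ)) x := by
  have h1 : HasDerivAt (fun y => ∫ t in x0..y, U t) (U x) x :=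
    intervalIntegral.integral_hasDerivAt_right (hU.intervalIntegrable _ _)
      (hU.stronglyMeasurableAtFilter _ _) hU.continuousAt
  exact (h1.ofReal_comp).const_mul Complex.I

lemma neg_one_pow (n : ℕ) : ((-1 : ℂ)) ^ n = 1 ∨ ((-1 : ℂ)) ^ n = -1 := by
  rcases Nat.even_or_odd n with h | h
  · exact Or.inl h.neg_one_pow
  · exact Or.inr h.neg_one_pow

lemma norm_exp_eq_one {eps c : ℂ} (heps : eps = 1 ∨ eps = -1) (hc : c = 1 ∨ c = -1) (x : ℝ) :
    ‖Complex.exp (eps * c * 2 * zsQ U x0 x)‖ = 1 := by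
  have : (eps * c * 2 * zsQ U x0 x).re = 0 := by
    rcases heps with rfl | rfl <;> rcases hc with rfl | rfl <;>
      simp [zsQ, Complex.mul_re]
  rw [Complex.norm_exp, this, Real.exp_zero]

lemma zsPow_cont (hU : Continuous U) (eps : ℂ) : ∀ n, Continuous (zsPow (zsQ U x0) x0 eps n)
  | 0 => continuous_const
  | (n + 1) => by
    have hc : Continuous fun s => zsPow (zsQ U x0) x0 eps n s *
        Complex.exp (eps * (-1) ^ (n + 1) * 2 * zsQ U x0 s) :=
      (zsPow_cont hU eps n).mul (Complex.continuous_exp.comp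
        (continuous_const.mul (zsQ_cont hU)))
    exact intervalIntegral.continuous_primitive (fun a b => hc.intervalIntegrable a b) x0

lemma zsPow_hasDerivAt (hU : Continuous U) (eps : ℂ) (n : ℕ) (x : ℝ) :
    HasDerivAt (zsPow (zsQ U x0) x0 eps (n + 1))
      (zsPow (zsQ U x0) x0 eps n x * Complex.exp (eps * (-1) ^ (n + 1) * 2 * zsQ U x0 x)) x := by
  have hc : Continuous fun s => zsPow (zsQ U x0) x0 eps n s *
      Complex.exp (eps * (-1) ^ (n + 1) * 2 * zsQ U x0 s) :=
    (zsPow_cont hU eps n).mul (Complex.continuous_exp.comp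
      (continuous_const.mul (zsQ_cont hU)))
  exact intervalIntegral.integral_hasDerivAt_right (hc.intervalIntegrable _ _)
    (hc.stronglyMeasurableAtFilter _ _) hc.continuousAt

lemma zsPow_x0 (eps : ℂ) (n : ℕ) : zsPow (zsQ U x0) x0 eps (n + 1) x0 = 0 := by
  simp [zsPow]


lemma key_bound (f : ℝ → ℂ) (hf : Continuous f) (n : ℕ)
    (hb : ∀ s, ‖f s‖ ≤ |s - x0| ^ n / n.factorial) (x : ℝ) :
    ‖∫ s in x0..x, f s‖ ≤ |x - x0| ^ (n + 1) / (n + 1).factorial := by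
  rcases le_total x0 x with h | h
  · calc ‖∫ s in x0..x, f s‖ ≤ ∫ s in x0..x, ‖f s‖ :=
          intervalIntegral.norm_integral_le_integral_norm h
    _ ≤ ∫ s in x0..x, (s - x0) ^ n / n.factorial := by
        apply intervalIntegral.integral_mono_on h
        · exact (hf.norm).intervalIntegrable _ _
        · exact (((continuous_id.sub continuous_const).pow n).div_const _).intervalIntegrable _ _
        · intro s hs
          calc ‖f s‖ ≤ |s - x0| ^ n / n.factorial := hb s
          _ = (s - x0) ^ n / n.factorial := by rw [abs_of_nonneg (by linarith [hs.1])]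
    _ = |x - x0| ^ (n + 1) / (n + 1).factorial := by
        rw [intervalIntegral.integral_div, intervalIntegral.integral_comp_sub_right (fun u => u ^ n) x0]
        simp only [sub_self, integral_pow]
        rw [abs_of_nonneg (by linarith), Nat.factorial_succ]
        push_cast
        field_simp
        simp
  · have hsymm : ‖∫ s in x0..x, f s‖ = ‖∫ s in x..x0, f s‖ := by
      rw [intervalIntegral.integral_symm, norm_neg]
    rw [hsymm]
    calc ‖∫ s in x..x0, f s‖ ≤ ∫ s in x..x0, ‖f s‖ :=
          intervalIntegral.norm_integral_le_integral_norm h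
    _ ≤ ∫ s in x..x0, (x0 - s) ^ n / n.factorial := by
        apply intervalIntegral.integral_mono_on h
        · exact (hf.norm).intervalIntegrable _ _
        · exact (((continuous_const.sub continuous_id).pow n).div_const _).intervalIntegrable _ _
        · intro s hs
          calc ‖f s‖ ≤ |s - x0| ^ n / n.factorial := hb s
          _ = (x0 - s) ^ n / n.factorial := by rw [abs_sub_comm, abs_of_nonneg (by linarith [hs.2])]
    _ = |x - x0| ^ (n + 1) / (n + 1).factorial := by
        rw [intervalIntegral.integral_div, intervalIntegral.integral_comp_sub_left (fun u => u ^ n) x0]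
        simp only [sub_self, integral_pow]
        rw [abs_sub_comm, abs_of_nonneg (by linarith), Nat.factorial_succ]
        push_cast
        field_simp
        simp

lemma zsPow_norm_le (hU : Continuous U) {eps : ℂ} (heps : eps = 1 ∨ eps = -1) :
    ∀ (n : ℕ) (x : ℝ), ‖zsPow (zsQ U x0) x0 eps n x‖ ≤ |x - x0| ^ n / n.factorial
  | 0, x => by simp [zsPow]
  | (n + 1), x => by
    apply key_bound _ ((zsPow_cont hU eps n).mul (Complex.continuous_exp.comp
      (continuous_const.mul (zsQ_cont hU)))) n
    intro s
    simp only [Pi.mul_apply, Function.comp_apply]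
    rw [norm_mul, norm_exp_eq_one heps (neg_one_pow (n + 1)), mul_one]
    exact zsPow_norm_le hU heps n s


lemma norm_exp_two (x : ℝ) : ‖Complex.exp (2 * zsQ U x0 x)‖ = 1 := by
  rw [Complex.norm_exp]
  simp [zsQ, Complex.mul_re]

lemma norm_exp_neg_two (x : ℝ) : ‖Complex.exp (-(2 * zsQ U x0 x))‖ = 1 := by
  rw [Complex.norm_exp]
  simp [zsQ, Complex.mul_re]
end ZS

/-- The series `p(x) = Σ λⁿ pₙ(x)` where `pₙ = zsPow` with `eps = (-1)ⁿ`. -/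
noncomputable def zsP (U : ℝ → ℝ) (x0 : ℝ) (lam : ℂ) (x : ℝ) : ℂ :=
  ∑' n : ℕ, lam ^ n * zsPow (zsQ U x0) x0 ((-1) ^ n) n x

/-- The series `r(x) = Σ λⁿ rₙ(x)` where `rₙ = zsPow` with `eps = (-1)ⁿ⁺¹`. -/
noncomputable def zsR (U : ℝ → ℝ) (x0 : ℝ) (lam : ℂ) (x : ℝ) : ℂ :=
  ∑' n : ℕ, lam ^ n * zsPow (zsQ U x0) x0 ((-1) ^ (n + 1)) n x

namespace ZS

variable {U : ℝ → ℝ} {x0 : ℝ}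

lemma summable_P (hU : Continuous U) (lam : ℂ) (x : ℝ) :
    Summable fun n : ℕ => lam ^ n * zsPow (zsQ U x0) x0 ((-1) ^ n) n x := by
  apply Summable.of_norm_bounded (Real.summable_pow_div_factorial (‖lam‖ * |x - x0|))
  intro n
  rw [norm_mul, norm_pow, mul_pow, mul_div_assoc]
  exact mul_le_mul_of_nonneg_left (zsPow_norm_le hU (neg_one_pow n) n x) (by positivity)

lemma summable_R (hU : Continuous U) (lam : ℂ) (x : ℝ) :
    Summable fun n : ℕ => lam ^ n * zsPow (zsQ U x0) x0 ((-1) ^ (n + 1)) n x := by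
  apply Summable.of_norm_bounded (Real.summable_pow_div_factorial (‖lam‖ * |x - x0|))
  intro n
  rw [norm_mul, norm_pow, mul_pow, mul_div_assoc]
  exact mul_le_mul_of_nonneg_left (zsPow_norm_le hU (neg_one_pow (n + 1)) n x) (by positivity)

lemma zsP_x0 (lam : ℂ) : zsP U x0 lam x0 = 1 := by
  rw [zsP, tsum_eq_single 0]
  · simp [zsPow]
  · rintro (_ | n) h
    · exact absurd rfl h
    · rw [zsPow_x0, mul_zero]

lemma zsR_x0 (lam : ℂ) : zsR U x0 lam x0 = 1 := by
  rw [zsR, tsum_eq_single 0]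
  · simp [zsPow]
  · rintro (_ | n) h
    · exact absurd rfl h
    · rw [zsPow_x0, mul_zero]

lemma zsP_hasDerivAt (hU : Continuous U) (lam : ℂ) (x : ℝ) :
    HasDerivAt (zsP U x0 lam)
      (lam * Complex.exp (2 * zsQ U x0 x) * zsR U x0 lam x) x := by
  classical
  set R : ℝ := |x - x0| + 1 with hR
  have hR0 : 0 < R := by positivity
  have hxR : |x - x0| < R := by rw [hR]; linarith
  set s : Set ℝ := Ioo (x0 - R) (x0 + R) with hs
  have hxs : x ∈ s := by
    rcases abs_sub_lt_iff.mp hxR with ⟨h1, h2⟩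
    exact ⟨by linarith, by linarith⟩
  set F : ℕ → ℝ → ℂ := fun n y => lam ^ n * zsPow (zsQ U x0) x0 ((-1) ^ n) n y with hF
  set F' : ℕ → ℝ → ℂ := fun n y =>
    match n with
    | 0 => 0
    | (m + 1) => lam ^ (m + 1) *
        (zsPow (zsQ U x0) x0 ((-1) ^ (m + 1)) m y * Complex.exp (2 * zsQ U x0 y)) with hF'
  have hderiv : ∀ (n : ℕ) (y : ℝ), HasDerivAt (F n) (F' n y) y := by
    rintro (_ | m) y
    · have : F 0 = fun _ => (1 : ℂ) := funext fun y => by simp [hF, zsPow]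
      rw [this]
      exact hasDerivAt_const y 1
    · have h1 : ((-1 : ℂ)) ^ (m + 1) * (-1) ^ (m + 1) = 1 := by
        rw [← pow_add]
        exact Even.neg_one_pow ⟨m + 1, by ring⟩
      have hd := (zsPow_hasDerivAt (x0 := x0) hU ((-1) ^ (m + 1)) m y).const_mul (lam ^ (m + 1))
      have harg : ((-1 : ℂ)) ^ (m + 1) * (-1) ^ (m + 1) * 2 * zsQ U x0 y = 2 * zsQ U x0 y := by
        rw [h1, one_mul]
      rw [harg] at hd
      exact hd
  have hboundP : ∀ (n : ℕ) (y : ℝ), ‖F n y‖ ≤ (‖lam‖ * |y - x0|) ^ n / n.factorial := by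
    intro n y
    rw [hF]
    calc ‖lam ^ n * zsPow (zsQ U x0) x0 ((-1) ^ n) n y‖
        = ‖lam‖ ^ n * ‖zsPow (zsQ U x0) x0 ((-1) ^ n) n y‖ := by rw [norm_mul, norm_pow]
      _ ≤ ‖lam‖ ^ n * (|y - x0| ^ n / n.factorial) :=
          mul_le_mul_of_nonneg_left (zsPow_norm_le hU (neg_one_pow n) n y) (by positivity)
      _ = (‖lam‖ * |y - x0|) ^ n / n.factorial := by rw [mul_pow]; ring
  have hbound : ∀ (n : ℕ), ∀ y ∈ s,
      ‖F' n y‖ ≤ ‖lam‖ * ((‖lam‖ * R) ^ (n - 1) / (n - 1).factorial) := by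
    rintro (_ | m) y hy
    · have : F' 0 y = 0 := rfl
      rw [this, norm_zero]
      positivity
    · have hyR : |y - x0| ≤ R := by
        rcases hy with ⟨h1, h2⟩
        rw [abs_sub_le_iff]
        exact ⟨by linarith, by linarith⟩
      have : F' (m + 1) y = lam ^ (m + 1) *
          (zsPow (zsQ U x0) x0 ((-1) ^ (m + 1)) m y * Complex.exp (2 * zsQ U x0 y)) := rfl
      rw [this]
      calc ‖lam ^ (m + 1) * (zsPow (zsQ U x0) x0 ((-1) ^ (m + 1)) m y *
              Complex.exp (2 * zsQ U x0 y))‖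
          = ‖lam‖ ^ (m + 1) * (‖zsPow (zsQ U x0) x0 ((-1) ^ (m + 1)) m y‖ * 1) := by
            rw [norm_mul, norm_mul, norm_pow, norm_exp_two]
        _ ≤ ‖lam‖ ^ (m + 1) * (|y - x0| ^ m / m.factorial) := by
            rw [mul_one]
            exact mul_le_mul_of_nonneg_left (zsPow_norm_le hU (neg_one_pow (m + 1)) m y)
              (by positivity)
        _ ≤ ‖lam‖ ^ (m + 1) * (R ^ m / m.factorial) := by
            apply mul_le_mul_of_nonneg_left _ (by positivity)
            apply div_le_div_of_nonneg_right (pow_le_pow_left₀ (abs_nonneg _) hyR m) (by positivity)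
        _ = ‖lam‖ * ((‖lam‖ * R) ^ (m + 1 - 1) / (m + 1 - 1).factorial) := by
            simp only [Nat.add_sub_cancel]
            rw [pow_succ, mul_pow]
            ring
  set u : ℕ → ℝ := fun n => ‖lam‖ * ((‖lam‖ * R) ^ (n - 1) / (n - 1).factorial) with hu_def
  have hu : Summable u := by
    apply (summable_nat_add_iff 1).mp
    have : (fun n => u (n + 1)) = fun n => ‖lam‖ * ((‖lam‖ * R) ^ n / n.factorial) := by
      funext n
      simp [hu_def]
    rw [this]
    exact (Real.summable_pow_div_factorial _).mul_left _
  have htuo : TendstoUniformlyOn (fun t y => ∑ n ∈ t, F' n y)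
      (fun y => ∑' n, F' n y) atTop s := tendstoUniformlyOn_tsum hu hbound
  have hmain : HasDerivAt (zsP U x0 lam) (∑' n, F' n x) x := by
    apply hasDerivAt_of_tendstoUniformlyOn isOpen_Ioo htuo
      (Eventually.of_forall fun t y _ => HasDerivAt.fun_sum fun n _ => hderiv n y)
      (fun y _ => (summable_P hU lam y).hasSum) hxs
  have hsum' : Summable fun n => F' n x :=
    Summable.of_norm_bounded hu fun n => hbound n x hxs
  have hkey : (∑' n, F' n x) = lam * Complex.exp (2 * zsQ U x0 x) * zsR U x0 lam x := by
    rw [Summable.tsum_eq_zero_add hsum']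
    have h0 : F' 0 x = 0 := rfl
    have hterm : ∀ m : ℕ, F' (m + 1) x = (lam * Complex.exp (2 * zsQ U x0 x)) *
        (lam ^ m * zsPow (zsQ U x0) x0 ((-1) ^ (m + 1)) m x) := by
      intro m
      show lam ^ (m + 1) *
        (zsPow (zsQ U x0) x0 ((-1) ^ (m + 1)) m x * Complex.exp (2 * zsQ U x0 x)) = _
      ring
    rw [h0, zero_add, tsum_congr hterm, tsum_mul_left]
    rfl
  rw [hkey] at hmain
  exact hmain


lemma zsR_hasDerivAt (hU : Continuous U) (lam : ℂ) (x : ℝ) :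
    HasDerivAt (zsR U x0 lam)
      (lam * Complex.exp (-(2 * zsQ U x0 x)) * zsP U x0 lam x) x := by
  classical
  set R : ℝ := |x - x0| + 1 with hR
  have hR0 : 0 < R := by positivity
  have hxR : |x - x0| < R := by rw [hR]; linarith
  set s : Set ℝ := Ioo (x0 - R) (x0 + R) with hs
  have hxs : x ∈ s := by
    rcases abs_sub_lt_iff.mp hxR with ⟨h1, h2⟩
    exact ⟨by linarith, by linarith⟩
  set F : ℕ → ℝ → ℂ := fun n y => lam ^ n * zsPow (zsQ U x0) x0 ((-1) ^ (n + 1)) n y with hF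
  set F' : ℕ → ℝ → ℂ := fun n y =>
    match n with
    | 0 => 0
    | (m + 1) => lam ^ (m + 1) *
        (zsPow (zsQ U x0) x0 ((-1) ^ (m + 2)) m y * Complex.exp (-(2 * zsQ U x0 y))) with hF'
  have hderiv : ∀ (n : ℕ) (y : ℝ), HasDerivAt (F n) (F' n y) y := by
    rintro (_ | m) y
    · have : F 0 = fun _ => (1 : ℂ) := funext fun y => by simp [hF, zsPow]
      rw [this]
      exact hasDerivAt_const y 1
    · have h1 : ((-1 : ℂ)) ^ (m + 2) * (-1) ^ (m + 1) = -1 := by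
        rw [← pow_add]
        exact Odd.neg_one_pow ⟨m + 1, by ring⟩
      have hd := (zsPow_hasDerivAt (x0 := x0) hU ((-1) ^ (m + 2)) m y).const_mul (lam ^ (m + 1))
      have harg : ((-1 : ℂ)) ^ (m + 2) * (-1) ^ (m + 1) * 2 * zsQ U x0 y
          = -(2 * zsQ U x0 y) := by rw [h1]; ring
      rw [harg] at hd
      exact hd
  have hbound : ∀ (n : ℕ), ∀ y ∈ s,
      ‖F' n y‖ ≤ ‖lam‖ * ((‖lam‖ * R) ^ (n - 1) / (n - 1).factorial) := by
    rintro (_ | m) y hy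
    · have : F' 0 y = 0 := rfl
      rw [this, norm_zero]
      positivity
    · have hyR : |y - x0| ≤ R := by
        rcases hy with ⟨h1, h2⟩
        rw [abs_sub_le_iff]
        exact ⟨by linarith, by linarith⟩
      have : F' (m + 1) y = lam ^ (m + 1) *
          (zsPow (zsQ U x0) x0 ((-1) ^ (m + 2)) m y * Complex.exp (-(2 * zsQ U x0 y))) := rfl
      rw [this]
      calc ‖lam ^ (m + 1) * (zsPow (zsQ U x0) x0 ((-1) ^ (m + 2)) m y *
              Complex.exp (-(2 * zsQ U x0 y)))‖
          = ‖lam‖ ^ (m + 1) * (‖zsPow (zsQ U x0) x0 ((-1) ^ (m + 2)) m y‖ * 1) := by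
            rw [norm_mul, norm_mul, norm_pow, norm_exp_neg_two]
        _ ≤ ‖lam‖ ^ (m + 1) * (|y - x0| ^ m / m.factorial) := by
            rw [mul_one]
            exact mul_le_mul_of_nonneg_left (zsPow_norm_le hU (neg_one_pow (m + 2)) m y)
              (by positivity)
        _ ≤ ‖lam‖ ^ (m + 1) * (R ^ m / m.factorial) := by
            apply mul_le_mul_of_nonneg_left _ (by positivity)
            apply div_le_div_of_nonneg_right (pow_le_pow_left₀ (abs_nonneg _) hyR m) (by positivity)
        _ = ‖lam‖ * ((‖lam‖ * R) ^ (m + 1 - 1) / (m + 1 - 1).factorial) := by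
            simp only [Nat.add_sub_cancel]
            rw [pow_succ, mul_pow]
            ring
  set u : ℕ → ℝ := fun n => ‖lam‖ * ((‖lam‖ * R) ^ (n - 1) / (n - 1).factorial) with hu_def
  have hu : Summable u := by
    apply (summable_nat_add_iff 1).mp
    have : (fun n => u (n + 1)) = fun n => ‖lam‖ * ((‖lam‖ * R) ^ n / n.factorial) := by
      funext n
      simp [hu_def]
    rw [this]
    exact (Real.summable_pow_div_factorial _).mul_left _
  have htuo : TendstoUniformlyOn (fun t y => ∑ n ∈ t, F' n y)
      (fun y => ∑' n, F' n y) atTop s := tendstoUniformlyOn_tsum hu hbound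
  have hmain : HasDerivAt (zsR U x0 lam) (∑' n, F' n x) x := by
    apply hasDerivAt_of_tendstoUniformlyOn isOpen_Ioo htuo
      (Eventually.of_forall fun t y _ => HasDerivAt.fun_sum fun n _ => hderiv n y)
      (fun y _ => (summable_R hU lam y).hasSum) hxs
  have hsum' : Summable fun n => F' n x :=
    Summable.of_norm_bounded hu fun n => hbound n x hxs
  have hkey : (∑' n, F' n x) = lam * Complex.exp (-(2 * zsQ U x0 x)) * zsP U x0 lam x := by
    rw [Summable.tsum_eq_zero_add hsum']
    have h0 : F' 0 x = 0 := rfl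
    have hterm : ∀ m : ℕ, F' (m + 1) x = (lam * Complex.exp (-(2 * zsQ U x0 x))) *
        (lam ^ m * zsPow (zsQ U x0) x0 ((-1) ^ m) m x) := by
      intro m
      have heps2 : ((-1 : ℂ)) ^ (m + 2) = (-1) ^ m := by
        rw [pow_add]
        simp
      show lam ^ (m + 1) *
        (zsPow (zsQ U x0) x0 ((-1) ^ (m + 2)) m x * Complex.exp (-(2 * zsQ U x0 x))) = _
      rw [heps2]
      ring
    rw [h0, zero_add, tsum_congr hterm, tsum_mul_left]
    rfl
  rw [hkey] at hmain
  exact hmain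

end ZS

noncomputable def zsN1 (U : ℝ → ℝ) (x0 : ℝ) (lam : ℂ) (x : ℝ) : ℂ :=
  (Complex.exp (-zsQ U x0 x) * zsP U x0 lam x + Complex.exp (zsQ U x0 x) * zsR U x0 lam x) / 2

noncomputable def zsN2 (U : ℝ → ℝ) (x0 : ℝ) (lam : ℂ) (x : ℝ) : ℂ :=
  (Complex.exp (zsQ U x0 x) * zsR U x0 lam x - Complex.exp (-zsQ U x0 x) * zsP U x0 lam x) *
    Complex.I / 2

namespace ZS

variable {U : ℝ → ℝ} {x0 : ℝ}

lemma zsQ_x0 : zsQ U x0 x0 = 0 := by simp [zsQ]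

lemma zsN1_x0 (lam : ℂ) : zsN1 U x0 lam x0 = 1 := by
  rw [zsN1, zsQ_x0, zsP_x0, zsR_x0]
  norm_num

lemma zsN2_x0 (lam : ℂ) : zsN2 U x0 lam x0 = 0 := by
  rw [zsN2, zsQ_x0, zsP_x0, zsR_x0]
  norm_num

lemma hA_hasDerivAt (hU : Continuous U) (lam : ℂ) (x : ℝ) :
    HasDerivAt (fun x => Complex.exp (-zsQ U x0 x) * zsP U x0 lam x)
      (-(Complex.I * (U x : ℂ)) * (Complex.exp (-zsQ U x0 x) * zsP U x0 lam x) +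
        lam * (Complex.exp (zsQ U x0 x) * zsR U x0 lam x)) x := by
  have h1 : HasDerivAt (fun x => Complex.exp (-zsQ U x0 x))
      (Complex.exp (-zsQ U x0 x) * -(Complex.I * (U x : ℂ))) x :=
    ((zsQ_hasDerivAt hU x).neg).cexp
  have h2 := zsP_hasDerivAt (x0 := x0) hU lam x
  have hmul := h1.fun_mul h2
  have hexp : Complex.exp (-zsQ U x0 x) * Complex.exp (2 * zsQ U x0 x)
      = Complex.exp (zsQ U x0 x) := by
    rw [← Complex.exp_add]
    congr 1
    ring
  refine hmul.congr_deriv (Eq.symm ?_)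
  linear_combination (lam * zsR U x0 lam x) * hexp.symm

lemma hB_hasDerivAt (hU : Continuous U) (lam : ℂ) (x : ℝ) :
    HasDerivAt (fun x => Complex.exp (zsQ U x0 x) * zsR U x0 lam x)
      ((Complex.I * (U x : ℂ)) * (Complex.exp (zsQ U x0 x) * zsR U x0 lam x) +
        lam * (Complex.exp (-zsQ U x0 x) * zsP U x0 lam x)) x := by
  have h1 : HasDerivAt (fun x => Complex.exp (zsQ U x0 x))
      (Complex.exp (zsQ U x0 x) * (Complex.I * (U x : ℂ))) x :=
    (zsQ_hasDerivAt hU x).cexp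
  have h2 := zsR_hasDerivAt (x0 := x0) hU lam x
  have hmul := h1.fun_mul h2
  have hexp : Complex.exp (zsQ U x0 x) * Complex.exp (-(2 * zsQ U x0 x))
      = Complex.exp (-zsQ U x0 x) := by
    rw [← Complex.exp_add]
    congr 1
    ring
  refine hmul.congr_deriv (Eq.symm ?_)
  linear_combination (lam * zsP U x0 lam x) * hexp.symm

lemma zsN1_hasDerivAt (hU : Continuous U) (lam : ℂ) (x : ℝ) :
    HasDerivAt (zsN1 U x0 lam)
      (lam * zsN1 U x0 lam x + (U x : ℂ) * zsN2 U x0 lam x) x := by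
  have h := ((hA_hasDerivAt (x0 := x0) hU lam x).fun_add (hB_hasDerivAt (x0 := x0) hU lam x)).div_const 2
  refine h.congr_deriv (Eq.symm ?_)
  rw [zsN1, zsN2]
  ring

lemma zsN2_hasDerivAt (hU : Continuous U) (lam : ℂ) (x : ℝ) :
    HasDerivAt (zsN2 U x0 lam)
      (-(lam * zsN2 U x0 lam x) - (U x : ℂ) * zsN1 U x0 lam x) x := by
  have h := (((hB_hasDerivAt (x0 := x0) hU lam x).fun_sub (hA_hasDerivAt (x0 := x0) hU lam x)).mul_const Complex.I).div_const 2
  refine h.congr_deriv (Eq.symm ?_)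
  rw [zsN1, zsN2]
  linear_combination (-(U x : ℂ) * (Complex.exp (zsQ U x0 x) * zsR U x0 lam x +
    Complex.exp (-zsQ U x0 x) * zsP U x0 lam x) / 2) * Complex.I_mul_I

lemma series_eq (hU : Continuous U) (lam : ℂ) (b : ℝ) :
    (∑' n : ℕ, lam ^ n *
      (Complex.exp ((-1) ^ n * zsQ U x0 b) * zsPow (zsQ U x0) x0 (-1) n b +
        Complex.exp ((-1) ^ (n + 1) * zsQ U x0 b) * zsPow (zsQ U x0) x0 1 n b))
    = 2 * zsN1 U x0 lam b := by
  have hterm : ∀ n : ℕ, lam ^ n *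
      (Complex.exp ((-1) ^ n * zsQ U x0 b) * zsPow (zsQ U x0) x0 (-1) n b +
        Complex.exp ((-1) ^ (n + 1) * zsQ U x0 b) * zsPow (zsQ U x0) x0 1 n b)
      = Complex.exp (-zsQ U x0 b) * (lam ^ n * zsPow (zsQ U x0) x0 ((-1) ^ n) n b) +
        Complex.exp (zsQ U x0 b) * (lam ^ n * zsPow (zsQ U x0) x0 ((-1) ^ (n + 1)) n b) := by
    intro n
    rcases Nat.even_or_odd n with h | h
    · have h1 : ((-1 : ℂ)) ^ n = 1 := h.neg_one_pow
      have h2 : ((-1 : ℂ)) ^ (n + 1) = -1 := h.add_one.neg_one_pow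
      rw [h1, h2, one_mul, neg_one_mul]
      ring
    · have h1 : ((-1 : ℂ)) ^ n = -1 := h.neg_one_pow
      have h2 : ((-1 : ℂ)) ^ (n + 1) = 1 := h.add_one.neg_one_pow
      rw [h1, h2, one_mul, neg_one_mul]
      ring
  rw [tsum_congr hterm, Summable.tsum_add (((summable_P hU lam b).mul_left _))
    (((summable_R hU lam b).mul_left _)), tsum_mul_left, tsum_mul_left]
  rw [zsN1, zsP, zsR]
  ring

end ZS

theorem zakharov_shabat_dispersion_equation
    (a : ℝ) (ha : 0 < a) (U : ℝ → ℝ) (hU : Continuous U)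
    (hsupp : Function.support U ⊆ Set.Icc (-a) a)
    (lam : ℂ) (hlam : 0 < lam.re) :
    (∃ n1 n2 : ℝ → ℂ,
      (∀ x ∈ Set.Icc (-a) a,
        HasDerivAt n1 (lam * n1 x + (U x : ℂ) * n2 x) x) ∧
      (∀ x ∈ Set.Icc (-a) a,
        HasDerivAt n2 (-(lam * n2 x) - (U x : ℂ) * n1 x) x) ∧
      n1 (-a) = 1 ∧ n2 (-a) = 0 ∧ n1 a = 0) ↔
    (∑' n : ℕ, lam ^ n *
      (Complex.exp ((-1) ^ n * zsQ U (-a) a) * zsPow (zsQ U (-a)) (-a) (-1) n a +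
        Complex.exp ((-1) ^ (n + 1) * zsQ U (-a) a) *
          zsPow (zsQ U (-a)) (-a) 1 n a)) = 0 := by
  rw [ZS.series_eq (x0 := -a) hU lam a]
  constructor
  · rintro ⟨m1, m2, hm1, hm2, hi1, hi2, hend⟩
    suffices h : zsN1 U (-a) lam a = 0 by rw [h, mul_zero]
    obtain ⟨C, hC0, hC⟩ : ∃ C : ℝ, 0 ≤ C ∧ ∀ x, |U x| ≤ C := by
      obtain ⟨C, hC⟩ :=
        (isCompact_Icc (a := -a) (b := a)).exists_bound_of_continuousOn hU.continuousOn
      refine ⟨max C 0, le_max_right _ _, fun x => ?_⟩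
      by_cases hx : x ∈ Set.Icc (-a) a
      · exact le_trans (hC x hx) (le_max_left _ _)
      · have h0 : U x = 0 := Function.notMem_support.mp fun hs => hx (hsupp hs)
        rw [h0, abs_zero]
        exact le_max_right _ _
    set K : NNReal := ‖lam‖₊ + ⟨C, hC0⟩ with hK
    have hKcoe : (K : ℝ) = ‖lam‖ + C := by
      rw [hK]
      push_cast
      rfl
    set v : ℝ → ℂ × ℂ → ℂ × ℂ := fun t y =>
      (lam * y.1 + (U t : ℂ) * y.2, -(lam * y.2) - (U t : ℂ) * y.1) with hv
    have hlip : ∀ t, LipschitzWith K (v t) := by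
      intro t
      apply LipschitzWith.of_dist_le_mul
      intro p q
      have hd1 : ‖p.1 - q.1‖ ≤ dist p q := by
        rw [← dist_eq_norm, Prod.dist_eq]
        exact le_max_left _ _
      have hd2 : ‖p.2 - q.2‖ ≤ dist p q := by
        rw [← dist_eq_norm, Prod.dist_eq]
        exact le_max_right _ _
      have hUt : ‖((U t : ℝ) : ℂ)‖ ≤ C := by
        rw [Complex.norm_real, Real.norm_eq_abs]
        exact hC t
      rw [Prod.dist_eq, hKcoe]
      apply max_le
      · rw [dist_eq_norm]
        have e : (lam * p.1 + (U t : ℂ) * p.2) - (lam * q.1 + (U t : ℂ) * q.2)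
            = lam * (p.1 - q.1) + (U t : ℂ) * (p.2 - q.2) := by ring
        rw [e]
        calc ‖lam * (p.1 - q.1) + (U t : ℂ) * (p.2 - q.2)‖
            ≤ ‖lam * (p.1 - q.1)‖ + ‖(U t : ℂ) * (p.2 - q.2)‖ := norm_add_le _ _
          _ = ‖lam‖ * ‖p.1 - q.1‖ + ‖((U t : ℝ) : ℂ)‖ * ‖p.2 - q.2‖ := by
              rw [norm_mul, norm_mul]
          _ ≤ ‖lam‖ * dist p q + C * dist p q :=
              add_le_add (mul_le_mul_of_nonneg_left hd1 (norm_nonneg _))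
                (mul_le_mul hUt hd2 (norm_nonneg _) hC0)
          _ = (‖lam‖ + C) * dist p q := by ring
      · rw [dist_eq_norm]
        have e : (-(lam * p.2) - (U t : ℂ) * p.1) - (-(lam * q.2) - (U t : ℂ) * q.1)
            = -(lam * (p.2 - q.2)) - (U t : ℂ) * (p.1 - q.1) := by ring
        rw [e]
        calc ‖-(lam * (p.2 - q.2)) - (U t : ℂ) * (p.1 - q.1)‖
            ≤ ‖-(lam * (p.2 - q.2))‖ + ‖(U t : ℂ) * (p.1 - q.1)‖ := norm_sub_le _ _
          _ = ‖lam‖ * ‖p.2 - q.2‖ + ‖((U t : ℝ) : ℂ)‖ * ‖p.1 - q.1‖ := by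
              rw [norm_neg, norm_mul, norm_mul]
          _ ≤ ‖lam‖ * dist p q + C * dist p q :=
              add_le_add (mul_le_mul_of_nonneg_left hd2 (norm_nonneg _))
                (mul_le_mul hUt hd1 (norm_nonneg _) hC0)
          _ = (‖lam‖ + C) * dist p q := by ring
    set f : ℝ → ℂ × ℂ := fun t => (m1 t, m2 t) with hf
    set g : ℝ → ℂ × ℂ := fun t => (zsN1 U (-a) lam t, zsN2 U (-a) lam t) with hg
    have hfc : ContinuousOn f (Set.Icc (-a) a) := fun t ht =>
      (((hm1 t ht).continuousAt.prodMk (hm2 t ht).continuousAt)).continuousWithinAt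
    have hgc : ContinuousOn g (Set.Icc (-a) a) := fun t ht =>
      (((ZS.zsN1_hasDerivAt hU lam t).continuousAt.prodMk
        (ZS.zsN2_hasDerivAt hU lam t).continuousAt)).continuousWithinAt
    have hf' : ∀ t ∈ Set.Ico (-a) a, HasDerivWithinAt f (v t (f t)) (Set.Ici t) t := fun t ht =>
      ((hm1 t (Set.Ico_subset_Icc_self ht)).prodMk
        (hm2 t (Set.Ico_subset_Icc_self ht))).hasDerivWithinAt
    have hg' : ∀ t ∈ Set.Ico (-a) a, HasDerivWithinAt g (v t (g t)) (Set.Ici t) t := fun t _ =>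
      ((ZS.zsN1_hasDerivAt hU lam t).prodMk (ZS.zsN2_hasDerivAt hU lam t)).hasDerivWithinAt
    have h0 : f (-a) = g (-a) := by
      rw [hf, hg]
      simp only [hi1, hi2, ZS.zsN1_x0, ZS.zsN2_x0]
    have heq := ODE_solution_unique hlip hfc hf' hgc hg' h0
    have hmem : a ∈ Set.Icc (-a) a := ⟨by linarith, le_refl a⟩
    have := heq hmem
    have h1 : m1 a = zsN1 U (-a) lam a := congrArg Prod.fst this
    rw [← h1, hend]
  · intro hser
    refine ⟨zsN1 U (-a) lam, zsN2 U (-a) lam,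
      fun x _ => ZS.zsN1_hasDerivAt hU lam x,
      fun x _ => ZS.zsN2_hasDerivAt hU lam x,
      ZS.zsN1_x0 lam, ZS.zsN2_x0 lam, ?_⟩
    exact (mul_eq_zero.mp hser).resolve_left two_ne_zero
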